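/- For A ∈ ℝᵐˣⁿ, an n×m matrix H satisfies the three conditions AHA = A, HAH = H, (AH)ᵀ = AH if and only if it satisfies the two linear conditions AHA = A and H(Iₘ − AA⁺) = 0. -/
import Mathlib

open Matrix

theorem ahsym_reflexive_iff_linear (m n : ℕ) (A : Matrix (Fin m) (Fin n) ℝ)
    (Aplus : Matrix (Fin n) (Fin m) ℝ)
    (hp1 : A * Aplus * A = A) (hp2 : Aplus * A * Aplus = Aplus)
    (hp3 : (A * Aplus)ᵀ = A * Aplus) (hp4 : (Aplus * A)ᵀ = Aplus * A)
    (H : Matrix (Fin n) (Fin m) ℝ) :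
    (A * H * A = A ∧ H * A * H = H ∧ (A * H)ᵀ = A * H) ↔
      (A * H * A = A ∧ H * (1 - A * Aplus) = 0) := by
  have key : ∀ X : Matrix (Fin n) (Fin m) ℝ,
      X * (1 - A * Aplus) = 0 ↔ X * (A * Aplus) = X := by
    intro X
    rw [Matrix.mul_sub, Matrix.mul_one, sub_eq_zero, eq_comm]
  have hp3' : Aplusᵀ * Aᵀ = A * Aplus := by
    rw [← Matrix.transpose_mul]; exact hp3
  have hAt : Aᵀ * (A * Aplus) = Aᵀ := by
    have h := congrArg Matrix.transpose hp1
    simp only [Matrix.transpose_mul] at h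
    rw [hp3'] at h
    exact h
  constructor
  · rintro ⟨h1, h2, h3⟩
    have h3' : Hᵀ * Aᵀ = A * H := by
      rw [← Matrix.transpose_mul]; exact h3
    refine ⟨h1, (key H).mpr ?_⟩
    conv_lhs => rw [← h2, Matrix.mul_assoc, Matrix.mul_assoc]
    rw [← Matrix.mul_assoc A H, ← h3', Matrix.mul_assoc Hᵀ Aᵀ, hAt, h3',
        ← Matrix.mul_assoc, h2]
  · rintro ⟨h1, h2⟩
    have h2' := (key H).mp h2
    have hAH : A * H = A * Aplus := by
      calc A * H = A * (H * (A * Aplus)) := by rw [h2']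
        _ = A * Aplus := by rw [← Matrix.mul_assoc, ← Matrix.mul_assoc, h1]
    refine ⟨h1, ?_, by rw [hAH, hp3]⟩
    rw [Matrix.mul_assoc, hAH, h2']
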